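/- The group Σ(36×3) = ⟨C, E, V⟩ ≤ GL(3,ℂ) has order 108, contains Δ(54) = ⟨C, E, V²⟩ as a normal subgroup of index 2, and has exactly 14 conjugacy classes. -/

import Mathlib

open Matrix

noncomputable def ω : ℂ := Complex.exp (2 * Real.pi * Complex.I / 3)

noncomputable def Cmat : Matrix (Fin 3) (Fin 3) ℂ := !![1,0,0; 0,ω,0; 0,0,ω^2]

noncomputable def Emat : Matrix (Fin 3) (Fin 3) ℂ := !![0,1,0; 0,0,1; 1,0,0]

noncomputable def Vmat : Matrix (Fin 3) (Fin 3) ℂ :=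
  (1 / ((Real.sqrt 3 : ℂ) * Complex.I)) • !![1,1,1; 1,ω,ω^2; 1,ω^2,ω]

noncomputable def Xmat : Matrix (Fin 3) (Fin 3) ℂ :=
  (1 / ((Real.sqrt 3 : ℂ) * Complex.I)) • !![1,1,ω^2; 1,ω,ω; ω,1,ω]

noncomputable def ε : ℂ := Complex.exp (4 * Real.pi * Complex.I / 9)

noncomputable def Dmat : Matrix (Fin 3) (Fin 3) ℂ := !![ε,0,0; 0,ε,0; 0,0,ε*ω]


lemma omega_eq : ω = Complex.exp ((2 * Real.pi / 3 : ℝ) * Complex.I) := by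
  rw [ω]; push_cast; ring_nf

lemma omega_re : ω.re = -(1/2) := by
  rw [omega_eq, Complex.exp_ofReal_mul_I_re]
  have : 2 * Real.pi / 3 = Real.pi - Real.pi / 3 := by ring
  rw [this, Real.cos_pi_sub, Real.cos_pi_div_three]

lemma omega_im : ω.im = Real.sqrt 3 / 2 := by
  rw [omega_eq, Complex.exp_ofReal_mul_I_im]
  have : 2 * Real.pi / 3 = Real.pi - Real.pi / 3 := by ring
  rw [this, Real.sin_pi_sub, Real.sin_pi_div_three]

lemma omega_im_ne : ω.im ≠ 0 := by
  rw [omega_im]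
  positivity

lemma omega_cube : ω ^ 3 = 1 := by
  rw [ω, ← Complex.exp_nat_mul]
  have : ((3:ℕ) : ℂ) * (2 * Real.pi * Complex.I / 3) = 2 * Real.pi * Complex.I := by push_cast; ring
  rw [this, Complex.exp_two_pi_mul_I]

lemma omega_ne_one : ω ≠ 1 := by
  intro h
  have := omega_im_ne
  rw [h] at this
  simp at this

lemma omega_quad : ω ^ 2 + ω + 1 = 0 := by
  have h : (ω - 1) * (ω ^ 2 + ω + 1) = 0 := by linear_combination omega_cube
  rcases mul_eq_zero.1 h with h1 | h2
  · exact absurd (sub_eq_zero.1 h1) omega_ne_one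
  · exact h2

noncomputable def si : ℂ := (Real.sqrt 3 : ℂ) * Complex.I

lemma si_sq : si ^ 2 = -3 := by
  rw [si, mul_pow, Complex.I_sq, ← Complex.ofReal_pow, Real.sq_sqrt (by norm_num : (3:ℝ) ≥ 0)]
  norm_num

lemma si_ne : si ≠ 0 := by
  rw [si]
  apply mul_ne_zero
  · simp [Real.sqrt_eq_zero']
  · exact Complex.I_ne_zero

lemma si_eq : si = 1 + 2 * ω := by
  apply Complex.ext
  · simp [si, omega_re]
  · simp [si, omega_im]
    ring
structure K where
  x : ℤ
  y : ℤ
deriving DecidableEq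

attribute [ext] K

instance : Zero K := ⟨⟨0,0⟩⟩
instance : One K := ⟨⟨1,0⟩⟩
instance : Add K := ⟨fun a b => ⟨a.x+b.x, a.y+b.y⟩⟩
instance : Neg K := ⟨fun a => ⟨-a.x, -a.y⟩⟩
instance : Mul K := ⟨fun a b => ⟨a.x*b.x - a.y*b.y, a.x*b.y + a.y*b.x - a.y*b.y⟩⟩

@[simp] lemma K_add_x (a b : K) : (a+b).x = a.x+b.x := rfl
@[simp] lemma K_add_y (a b : K) : (a+b).y = a.y+b.y := rfl
@[simp] lemma K_neg_x (a : K) : (-a).x = -a.x := rfl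
@[simp] lemma K_neg_y (a : K) : (-a).y = -a.y := rfl
@[simp] lemma K_mul_x (a b : K) : (a*b).x = a.x*b.x - a.y*b.y := rfl
@[simp] lemma K_mul_y (a b : K) : (a*b).y = a.x*b.y + a.y*b.x - a.y*b.y := rfl
@[simp] lemma K_zero_x : (0 : K).x = 0 := rfl
@[simp] lemma K_zero_y : (0 : K).y = 0 := rfl
@[simp] lemma K_one_x : (1 : K).x = 1 := rfl
@[simp] lemma K_one_y : (1 : K).y = 0 := rfl

instance : CommRing K where
  add_assoc a b c := by ext <;> simp <;> ring
  zero_add a := by ext <;> simp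
  add_zero a := by ext <;> simp
  add_comm a b := by ext <;> simp <;> ring
  mul_assoc a b c := by ext <;> simp <;> ring
  one_mul a := by ext <;> simp
  mul_one a := by ext <;> simp
  left_distrib a b c := by ext <;> simp <;> ring
  right_distrib a b c := by ext <;> simp <;> ring
  zero_mul a := by ext <;> simp
  mul_zero a := by ext <;> simp
  mul_comm a b := by ext <;> simp <;> ring
  neg_add_cancel a := by ext <;> simp
  nsmul := nsmulRec
  zsmul := zsmulRec

noncomputable def φ : K →+* ℂ where
  toFun k := (k.x : ℂ) + (k.y : ℂ) * ω
  map_one' := by simp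
  map_zero' := by simp
  map_add' a b := by simp; push_cast; ring
  map_mul' a b := by
    simp only [K_mul_x, K_mul_y]
    push_cast
    linear_combination (-(a.y : ℂ) * (b.y : ℂ)) * omega_quad

lemma phi_inj : Function.Injective φ := by
  intro a b h
  simp only [φ, RingHom.coe_mk, MonoidHom.coe_mk, OneHom.coe_mk] at h
  have him := congrArg Complex.im h
  have hre := congrArg Complex.re h
  simp only [Complex.add_im, Complex.add_re, Complex.mul_im, Complex.mul_re,
    Complex.intCast_re, Complex.intCast_im, zero_mul, mul_zero, add_zero, zero_add,
    sub_zero] at him hre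
  have hy : a.y = b.y := by
    have := mul_right_cancel₀ omega_im_ne him
    exact_mod_cast this
  have hx : a.x = b.x := by
    rw [hy] at hre
    have : (a.x : ℝ) = (b.x : ℝ) := by linarith
    exact_mod_cast this
  ext <;> assumption

noncomputable def φM : Matrix (Fin 3) (Fin 3) K →+* Matrix (Fin 3) (Fin 3) ℂ := φ.mapMatrix

lemma phiM_inj : Function.Injective φM := by
  intro a b h
  apply Matrix.ext
  intro i j
  exact phi_inj (congrFun (congrFun h i) j)

lemma phiM_smul (s : K) (M : Matrix (Fin 3) (Fin 3) K) : φM (s • M) = φ s • φM M := by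
  ext i j
  simp [φM, RingHom.mapMatrix_apply, Matrix.map_apply, map_mul φ]

lemma phi_sK : φ ⟨1,2⟩ = si := by
  simp only [φ, RingHom.coe_mk, MonoidHom.coe_mk, OneHom.coe_mk, si_eq]
  push_cast
  ring

lemma phi_m3 : φ ⟨-3,0⟩ = -3 := by simp [φ]
abbrev T := ZMod 3 × ZMod 3 × ZMod 3 × ZMod 4
abbrev A36 := ZMod 3 × ZMod 3 × ZMod 4

def i3 (a : ZMod 3) : Fin 3 := ⟨a.val, ZMod.val_lt a⟩
def i4 (a : ZMod 4) : Fin 4 := ⟨a.val, ZMod.val_lt a⟩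

def t36 (t : T) : A36 := (t.2.1, t.2.2.1, t.2.2.2)

def pT (t : T) : ℕ := t.2.2.2.val % 2
def p36 (t : A36) : ℕ := t.2.2.val % 2

def conjk (k : ZMod 4) (a b : ZMod 3) : ZMod 3 × ZMod 3 × ZMod 3 :=
  ![(0, a, b), (2*a*b, 2*b, a), (0, 2*a, 2*b), (2*a*b, b, 2*a)] (i4 k)

def ph (t u : A36) : ZMod 3 :=
  (conjk t.2.2 u.1 u.2.1).1 + t.2.1 * (conjk t.2.2 u.1 u.2.1).2.1

def m36 (t u : A36) : A36 :=
  (t.1 + (conjk t.2.2 u.1 u.2.1).2.1, t.2.1 + (conjk t.2.2 u.1 u.2.1).2.2, t.2.2 + u.2.2)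

def mT (t u : T) : T :=
  (t.1 + u.1 + ph (t36 t) (t36 u), m36 (t36 t) (t36 u))

def invT (t : T) : T :=
  (-t.1 + t.2.1 * t.2.2.1 + (conjk (-t.2.2.2) (-t.2.1) (-t.2.2.1)).1,
   (conjk (-t.2.2.2) (-t.2.1) (-t.2.2.1)).2.1,
   (conjk (-t.2.2.2) (-t.2.1) (-t.2.2.1)).2.2,
   -t.2.2.2)

def e0 : T := (0,0,0,0)

def sK : K := ⟨1, 2⟩
def ωK : K := ⟨0, 1⟩

structure M3 where
  a : K
  b : K
  c : K
  d : K
  e : K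
  f : K
  g : K
  h : K
  i : K
deriving DecidableEq

def M3.mul (A B : M3) : M3 :=
  ⟨A.a*B.a + A.b*B.d + A.c*B.g, A.a*B.b + A.b*B.e + A.c*B.h, A.a*B.c + A.b*B.f + A.c*B.i,
   A.d*B.a + A.e*B.d + A.f*B.g, A.d*B.b + A.e*B.e + A.f*B.h, A.d*B.c + A.e*B.f + A.f*B.i,
   A.g*B.a + A.h*B.d + A.i*B.g, A.g*B.b + A.h*B.e + A.i*B.h, A.g*B.c + A.h*B.f + A.i*B.i⟩

def M3.sm (c : K) (A : M3) : M3 :=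
  ⟨c*A.a, c*A.b, c*A.c, c*A.d, c*A.e, c*A.f, c*A.g, c*A.h, c*A.i⟩

def M3.one : M3 := ⟨1,0,0,0,1,0,0,0,1⟩

def kpow (c : K) : ℕ → K
  | 0 => 1
  | n+1 => kpow c n * c
def n36Tbl : Fin 3 → Fin 3 → Fin 4 → M3 :=
![![![⟨⟨1, 0⟩, ⟨0, 0⟩, ⟨0, 0⟩, ⟨0, 0⟩, ⟨1, 0⟩, ⟨0, 0⟩, ⟨0, 0⟩, ⟨0, 0⟩, ⟨1, 0⟩⟩,
   ⟨⟨1, 0⟩, ⟨1, 0⟩, ⟨1, 0⟩, ⟨1, 0⟩, ⟨0, 1⟩, ⟨-1, -1⟩, ⟨1, 0⟩, ⟨-1, -1⟩, ⟨0, 1⟩⟩,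
   ⟨⟨-1, 0⟩, ⟨0, 0⟩, ⟨0, 0⟩, ⟨0, 0⟩, ⟨0, 0⟩, ⟨-1, 0⟩, ⟨0, 0⟩, ⟨-1, 0⟩, ⟨0, 0⟩⟩,
   ⟨⟨-1, 0⟩, ⟨-1, 0⟩, ⟨-1, 0⟩, ⟨-1, 0⟩, ⟨1, 1⟩, ⟨0, -1⟩, ⟨-1, 0⟩, ⟨0, -1⟩, ⟨1, 1⟩⟩],
  ![⟨⟨0, 0⟩, ⟨1, 0⟩, ⟨0, 0⟩, ⟨0, 0⟩, ⟨0, 0⟩, ⟨1, 0⟩, ⟨1, 0⟩, ⟨0, 0⟩, ⟨0, 0⟩⟩,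
   ⟨⟨1, 0⟩, ⟨0, 1⟩, ⟨-1, -1⟩, ⟨1, 0⟩, ⟨-1, -1⟩, ⟨0, 1⟩, ⟨1, 0⟩, ⟨1, 0⟩, ⟨1, 0⟩⟩,
   ⟨⟨0, 0⟩, ⟨0, 0⟩, ⟨-1, 0⟩, ⟨0, 0⟩, ⟨-1, 0⟩, ⟨0, 0⟩, ⟨-1, 0⟩, ⟨0, 0⟩, ⟨0, 0⟩⟩,
   ⟨⟨-1, 0⟩, ⟨1, 1⟩, ⟨0, -1⟩, ⟨-1, 0⟩, ⟨0, -1⟩, ⟨1, 1⟩, ⟨-1, 0⟩, ⟨-1, 0⟩, ⟨-1, 0⟩⟩],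
  ![⟨⟨0, 0⟩, ⟨0, 0⟩, ⟨1, 0⟩, ⟨1, 0⟩, ⟨0, 0⟩, ⟨0, 0⟩, ⟨0, 0⟩, ⟨1, 0⟩, ⟨0, 0⟩⟩,
   ⟨⟨1, 0⟩, ⟨-1, -1⟩, ⟨0, 1⟩, ⟨1, 0⟩, ⟨1, 0⟩, ⟨1, 0⟩, ⟨1, 0⟩, ⟨0, 1⟩, ⟨-1, -1⟩⟩,
   ⟨⟨0, 0⟩, ⟨-1, 0⟩, ⟨0, 0⟩, ⟨-1, 0⟩, ⟨0, 0⟩, ⟨0, 0⟩, ⟨0, 0⟩, ⟨0, 0⟩, ⟨-1, 0⟩⟩,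
   ⟨⟨-1, 0⟩, ⟨0, -1⟩, ⟨1, 1⟩, ⟨-1, 0⟩, ⟨-1, 0⟩, ⟨-1, 0⟩, ⟨-1, 0⟩, ⟨1, 1⟩, ⟨0, -1⟩⟩]],
 ![![⟨⟨1, 0⟩, ⟨0, 0⟩, ⟨0, 0⟩, ⟨0, 0⟩, ⟨0, 1⟩, ⟨0, 0⟩, ⟨0, 0⟩, ⟨0, 0⟩, ⟨-1, -1⟩⟩,
   ⟨⟨1, 0⟩, ⟨1, 0⟩, ⟨1, 0⟩, ⟨0, 1⟩, ⟨-1, -1⟩, ⟨1, 0⟩, ⟨-1, -1⟩, ⟨0, 1⟩, ⟨1, 0⟩⟩,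
   ⟨⟨-1, 0⟩, ⟨0, 0⟩, ⟨0, 0⟩, ⟨0, 0⟩, ⟨0, 0⟩, ⟨0, -1⟩, ⟨0, 0⟩, ⟨1, 1⟩, ⟨0, 0⟩⟩,
   ⟨⟨-1, 0⟩, ⟨-1, 0⟩, ⟨-1, 0⟩, ⟨0, -1⟩, ⟨-1, 0⟩, ⟨1, 1⟩, ⟨1, 1⟩, ⟨-1, 0⟩, ⟨0, -1⟩⟩],
  ![⟨⟨0, 0⟩, ⟨1, 0⟩, ⟨0, 0⟩, ⟨0, 0⟩, ⟨0, 0⟩, ⟨0, 1⟩, ⟨-1, -1⟩, ⟨0, 0⟩, ⟨0, 0⟩⟩,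
   ⟨⟨1, 0⟩, ⟨0, 1⟩, ⟨-1, -1⟩, ⟨0, 1⟩, ⟨1, 0⟩, ⟨-1, -1⟩, ⟨-1, -1⟩, ⟨-1, -1⟩, ⟨-1, -1⟩⟩,
   ⟨⟨0, 0⟩, ⟨0, 0⟩, ⟨-1, 0⟩, ⟨0, 0⟩, ⟨0, -1⟩, ⟨0, 0⟩, ⟨1, 1⟩, ⟨0, 0⟩, ⟨0, 0⟩⟩,
   ⟨⟨-1, 0⟩, ⟨1, 1⟩, ⟨0, -1⟩, ⟨0, -1⟩, ⟨1, 1⟩, ⟨-1, 0⟩, ⟨1, 1⟩, ⟨1, 1⟩, ⟨1, 1⟩⟩],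
  ![⟨⟨0, 0⟩, ⟨0, 0⟩, ⟨1, 0⟩, ⟨0, 1⟩, ⟨0, 0⟩, ⟨0, 0⟩, ⟨0, 0⟩, ⟨-1, -1⟩, ⟨0, 0⟩⟩,
   ⟨⟨1, 0⟩, ⟨-1, -1⟩, ⟨0, 1⟩, ⟨0, 1⟩, ⟨0, 1⟩, ⟨0, 1⟩, ⟨-1, -1⟩, ⟨1, 0⟩, ⟨0, 1⟩⟩,
   ⟨⟨0, 0⟩, ⟨-1, 0⟩, ⟨0, 0⟩, ⟨0, -1⟩, ⟨0, 0⟩, ⟨0, 0⟩, ⟨0, 0⟩, ⟨0, 0⟩, ⟨1, 1⟩⟩,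
   ⟨⟨-1, 0⟩, ⟨0, -1⟩, ⟨1, 1⟩, ⟨0, -1⟩, ⟨0, -1⟩, ⟨0, -1⟩, ⟨1, 1⟩, ⟨0, -1⟩, ⟨-1, 0⟩⟩]],
 ![![⟨⟨1, 0⟩, ⟨0, 0⟩, ⟨0, 0⟩, ⟨0, 0⟩, ⟨-1, -1⟩, ⟨0, 0⟩, ⟨0, 0⟩, ⟨0, 0⟩, ⟨0, 1⟩⟩,
   ⟨⟨1, 0⟩, ⟨1, 0⟩, ⟨1, 0⟩, ⟨-1, -1⟩, ⟨1, 0⟩, ⟨0, 1⟩, ⟨0, 1⟩, ⟨1, 0⟩, ⟨-1, -1⟩⟩,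
   ⟨⟨-1, 0⟩, ⟨0, 0⟩, ⟨0, 0⟩, ⟨0, 0⟩, ⟨0, 0⟩, ⟨1, 1⟩, ⟨0, 0⟩, ⟨0, -1⟩, ⟨0, 0⟩⟩,
   ⟨⟨-1, 0⟩, ⟨-1, 0⟩, ⟨-1, 0⟩, ⟨1, 1⟩, ⟨0, -1⟩, ⟨-1, 0⟩, ⟨0, -1⟩, ⟨1, 1⟩, ⟨-1, 0⟩⟩],
  ![⟨⟨0, 0⟩, ⟨1, 0⟩, ⟨0, 0⟩, ⟨0, 0⟩, ⟨0, 0⟩, ⟨-1, -1⟩, ⟨0, 1⟩, ⟨0, 0⟩, ⟨0, 0⟩⟩,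
   ⟨⟨1, 0⟩, ⟨0, 1⟩, ⟨-1, -1⟩, ⟨-1, -1⟩, ⟨0, 1⟩, ⟨1, 0⟩, ⟨0, 1⟩, ⟨0, 1⟩, ⟨0, 1⟩⟩,
   ⟨⟨0, 0⟩, ⟨0, 0⟩, ⟨-1, 0⟩, ⟨0, 0⟩, ⟨1, 1⟩, ⟨0, 0⟩, ⟨0, -1⟩, ⟨0, 0⟩, ⟨0, 0⟩⟩,
   ⟨⟨-1, 0⟩, ⟨1, 1⟩, ⟨0, -1⟩, ⟨1, 1⟩, ⟨-1, 0⟩, ⟨0, -1⟩, ⟨0, -1⟩, ⟨0, -1⟩, ⟨0, -1⟩⟩],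
  ![⟨⟨0, 0⟩, ⟨0, 0⟩, ⟨1, 0⟩, ⟨-1, -1⟩, ⟨0, 0⟩, ⟨0, 0⟩, ⟨0, 0⟩, ⟨0, 1⟩, ⟨0, 0⟩⟩,
   ⟨⟨1, 0⟩, ⟨-1, -1⟩, ⟨0, 1⟩, ⟨-1, -1⟩, ⟨-1, -1⟩, ⟨-1, -1⟩, ⟨0, 1⟩, ⟨-1, -1⟩, ⟨1, 0⟩⟩,
   ⟨⟨0, 0⟩, ⟨-1, 0⟩, ⟨0, 0⟩, ⟨1, 1⟩, ⟨0, 0⟩, ⟨0, 0⟩, ⟨0, 0⟩, ⟨0, 0⟩, ⟨0, -1⟩⟩,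
   ⟨⟨-1, 0⟩, ⟨0, -1⟩, ⟨1, 1⟩, ⟨1, 1⟩, ⟨1, 1⟩, ⟨1, 1⟩, ⟨0, -1⟩, ⟨-1, 0⟩, ⟨1, 1⟩⟩]]]

def n36 (t : A36) : M3 := n36Tbl (i3 t.1) (i3 t.2.1) (i4 t.2.2)

def CKM : M3 := ⟨⟨1,0⟩, 0, 0, 0, ⟨0,1⟩, 0, 0, 0, ⟨-1,-1⟩⟩
def EKM : M3 := ⟨0, ⟨1,0⟩, 0, 0, 0, ⟨1,0⟩, ⟨1,0⟩, 0, 0⟩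
def VKM : M3 := ⟨⟨1,0⟩, ⟨1,0⟩, ⟨1,0⟩, ⟨1,0⟩, ⟨0,1⟩, ⟨-1,-1⟩, ⟨1,0⟩, ⟨-1,-1⟩, ⟨0,1⟩⟩

def ct : T := (0,1,0,0)
def et : T := (0,0,1,0)
def vt : T := (0,0,0,1)
def zt : T := (1,0,0,0)

def powT (x : T) : ℕ → T
  | 0 => e0
  | n+1 => mT (powT x n) x

section Decides

set_option maxHeartbeats 8000000
set_option maxRecDepth 200000

lemma Dgen : n36 (t36 ct) = CKM ∧ n36 (t36 et) = EKM ∧ n36 (t36 vt) = VKM ∧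
    n36 (t36 e0) = M3.one ∧ n36 (t36 zt) = M3.one ∧
    M3.mul (M3.mul (M3.mul EKM CKM) (M3.mul EKM EKM)) (M3.mul CKM CKM) = M3.sm ωK M3.one := by
  decide +kernel

lemma D2 : ∀ t u : A36, M3.mul (n36 t) (n36 u)
    = M3.sm (kpow ωK (ph t u).val) (M3.sm (kpow sK (p36 t + p36 u - p36 (m36 t u))) (n36 (m36 t u))) := by
  decide +kernel

lemma D7 : ∀ t : T, mT t (invT t) = e0 ∧ mT (invT t) t = e0 := by decide +kernel

lemma Dcanc : ∀ t u : T, mT t (invT u) = e0 → t = u := by decide +kernel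

lemma Dtriv : ∀ t : T, M3.sm (kpow ωK t.1.val) (n36 (t36 t)) = M3.sm (kpow sK (pT t)) M3.one → t = e0 := by
  decide +kernel

lemma Dword : ∀ t : T,
    mT (mT (mT (powT zt t.1.val) (powT ct t.2.1.val)) (powT et t.2.2.1.val)) (powT vt t.2.2.2.val) = t := by
  decide +kernel

lemma Dp4 : ∀ x y : ZMod 4, (x + y).val % 2 = (x.val % 2 + y.val % 2) % 2 := by decide

lemma Dn4 : ∀ x : ZMod 4, (-x).val % 2 = x.val % 2 := by decide

lemma Dvt2 : mT vt vt = ((0,0,0,2) : T) := by decide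

end Decides

lemma pT_mul (t u : T) : pT (mT t u) = (pT t + pT u) % 2 := Dp4 t.2.2.2 u.2.2.2

lemma pT_inv (t : T) : pT (invT t) = pT t := Dn4 t.2.2.2

lemma pT_lt (t : T) : pT t < 2 := Nat.mod_lt _ (by norm_num)
def reps : Fin 14 → T :=
![((0,0,0,0) : T), ((0,0,0,1) : T), ((0,0,0,2) : T), ((0,0,0,3) : T), ((0,0,1,0) : T), ((0,0,1,1) : T), ((0,0,1,3) : T), ((0,1,1,0) : T), ((0,1,1,2) : T), ((0,1,2,2) : T), ((1,0,0,0) : T), ((1,0,0,1) : T), ((1,0,1,3) : T), ((2,0,0,0) : T)]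

def clsTbl : Fin 3 → Fin 3 → Fin 3 → Fin 4 → Fin 14 :=
![![![![(0 : Fin 14), (1 : Fin 14), (2 : Fin 14), (3 : Fin 14)], ![(4 : Fin 14), (5 : Fin 14), (2 : Fin 14), (6 : Fin 14)], ![(4 : Fin 14), (5 : Fin 14), (2 : Fin 14), (6 : Fin 14)]],
  ![![(4 : Fin 14), (5 : Fin 14), (2 : Fin 14), (6 : Fin 14)], ![(7 : Fin 14), (5 : Fin 14), (8 : Fin 14), (3 : Fin 14)], ![(7 : Fin 14), (1 : Fin 14), (9 : Fin 14), (6 : Fin 14)]],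
  ![![(4 : Fin 14), (5 : Fin 14), (2 : Fin 14), (6 : Fin 14)], ![(7 : Fin 14), (1 : Fin 14), (9 : Fin 14), (6 : Fin 14)], ![(7 : Fin 14), (5 : Fin 14), (8 : Fin 14), (3 : Fin 14)]]],
 ![![![(10 : Fin 14), (11 : Fin 14), (8 : Fin 14), (6 : Fin 14)], ![(4 : Fin 14), (1 : Fin 14), (8 : Fin 14), (12 : Fin 14)], ![(4 : Fin 14), (1 : Fin 14), (8 : Fin 14), (12 : Fin 14)]],
  ![![(4 : Fin 14), (1 : Fin 14), (8 : Fin 14), (12 : Fin 14)], ![(7 : Fin 14), (1 : Fin 14), (9 : Fin 14), (6 : Fin 14)], ![(7 : Fin 14), (11 : Fin 14), (2 : Fin 14), (12 : Fin 14)]],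
  ![![(4 : Fin 14), (1 : Fin 14), (8 : Fin 14), (12 : Fin 14)], ![(7 : Fin 14), (11 : Fin 14), (2 : Fin 14), (12 : Fin 14)], ![(7 : Fin 14), (1 : Fin 14), (9 : Fin 14), (6 : Fin 14)]]],
 ![![![(13 : Fin 14), (5 : Fin 14), (9 : Fin 14), (12 : Fin 14)], ![(4 : Fin 14), (11 : Fin 14), (9 : Fin 14), (3 : Fin 14)], ![(4 : Fin 14), (11 : Fin 14), (9 : Fin 14), (3 : Fin 14)]],
  ![![(4 : Fin 14), (11 : Fin 14), (9 : Fin 14), (3 : Fin 14)], ![(7 : Fin 14), (11 : Fin 14), (2 : Fin 14), (12 : Fin 14)], ![(7 : Fin 14), (5 : Fin 14), (8 : Fin 14), (3 : Fin 14)]],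
  ![![(4 : Fin 14), (11 : Fin 14), (9 : Fin 14), (3 : Fin 14)], ![(7 : Fin 14), (5 : Fin 14), (8 : Fin 14), (3 : Fin 14)], ![(7 : Fin 14), (11 : Fin 14), (2 : Fin 14), (12 : Fin 14)]]]]

def witTbl : Fin 3 → Fin 3 → Fin 3 → Fin 4 → T :=
![![![![((0,0,0,0) : T), ((0,0,0,0) : T), ((0,0,0,0) : T), ((0,0,0,0) : T)], ![((0,0,0,0) : T), ((0,0,0,0) : T), ((0,0,2,0) : T), ((0,0,0,0) : T)], ![((0,0,0,2) : T), ((0,0,0,2) : T), ((0,0,1,0) : T), ((0,0,0,2) : T)]],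
  ![![((0,0,0,3) : T), ((0,0,0,3) : T), ((0,2,0,0) : T), ((0,0,0,3) : T)], ![((0,0,0,0) : T), ((0,1,0,2) : T), ((0,0,0,0) : T), ((0,1,0,0) : T)], ![((0,0,1,3) : T), ((0,1,0,0) : T), ((0,0,0,0) : T), ((0,1,0,0) : T)]],
  ![![((0,0,0,1) : T), ((0,0,0,1) : T), ((0,1,0,0) : T), ((0,0,0,1) : T)], ![((0,0,2,1) : T), ((0,2,0,0) : T), ((0,0,0,2) : T), ((0,1,0,3) : T)], ![((0,0,0,2) : T), ((0,1,0,3) : T), ((0,0,0,2) : T), ((0,2,0,0) : T)]]],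
 ![![![((0,0,0,0) : T), ((0,0,0,0) : T), ((0,1,1,0) : T), ((0,1,1,0) : T)], ![((0,2,0,0) : T), ((0,1,2,0) : T), ((0,1,0,0) : T), ((0,0,0,0) : T)], ![((0,1,0,2) : T), ((0,2,1,0) : T), ((0,1,0,3) : T), ((0,0,0,2) : T)]],
  ![![((0,0,1,3) : T), ((0,2,2,0) : T), ((0,0,1,0) : T), ((0,0,0,3) : T)], ![((0,0,1,0) : T), ((0,0,1,0) : T), ((0,0,0,1) : T), ((0,0,1,1) : T)], ![((0,0,2,3) : T), ((0,1,0,0) : T), ((0,2,1,0) : T), ((0,1,0,0) : T)]],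
  ![![((0,0,2,1) : T), ((0,1,1,0) : T), ((0,0,1,1) : T), ((0,0,0,1) : T)], ![((0,0,1,1) : T), ((0,2,0,0) : T), ((0,1,2,0) : T), ((0,1,0,3) : T)], ![((0,0,2,2) : T), ((0,0,2,0) : T), ((0,0,0,3) : T), ((0,0,1,0) : T)]]],
 ![![![((0,0,0,0) : T), ((0,1,1,3) : T), ((0,1,1,1) : T), ((0,1,1,0) : T)], ![((0,1,0,0) : T), ((0,1,2,0) : T), ((0,1,0,1) : T), ((0,2,2,0) : T)], ![((0,2,0,2) : T), ((0,2,1,0) : T), ((0,1,0,0) : T), ((0,1,1,0) : T)]],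
  ![![((0,0,2,3) : T), ((0,2,2,0) : T), ((0,0,1,1) : T), ((0,2,1,0) : T)], ![((0,0,2,0) : T), ((0,0,1,0) : T), ((0,2,2,0) : T), ((0,0,1,1) : T)], ![((0,0,0,3) : T), ((0,0,1,0) : T), ((0,0,0,3) : T), ((0,0,2,0) : T)]],
  ![![((0,0,1,1) : T), ((0,1,1,0) : T), ((0,0,1,2) : T), ((0,1,2,0) : T)], ![((0,0,0,1) : T), ((0,0,1,3) : T), ((0,0,0,1) : T), ((0,0,1,0) : T)], ![((0,0,1,2) : T), ((0,0,2,0) : T), ((0,1,1,0) : T), ((0,0,1,0) : T)]]]]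

def clsT (t : T) : Fin 14 := clsTbl (i3 t.1) (i3 t.2.1) (i3 t.2.2.1) (i4 t.2.2.2)
def witT (t : T) : T := witTbl (i3 t.1) (i3 t.2.1) (i3 t.2.2.1) (i4 t.2.2.2)

set_option maxHeartbeats 8000000 in
set_option maxRecDepth 200000 in
lemma Dwit : ∀ t : T, mT (mT (witT t) (reps (clsT t))) (invT (witT t)) = t := by decide +kernel

set_option maxHeartbeats 8000000 in
set_option maxRecDepth 200000 in
lemma Dreps : ∀ i j : Fin 14, (∃ g : T, mT (mT g (reps i)) (invT g) = reps j) → i = j := by decide +kernel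
def toMat (A : M3) : Matrix (Fin 3) (Fin 3) K := !![A.a, A.b, A.c; A.d, A.e, A.f; A.g, A.h, A.i]

lemma toMat_mul (A B : M3) : toMat (M3.mul A B) = toMat A * toMat B := by
  apply Matrix.ext
  intro i j
  fin_cases i <;> fin_cases j <;> refine K.ext ?_ ?_ <;>
    simp [toMat, M3.mul, Matrix.mul_apply, Fin.sum_univ_three] <;> (try ring)

lemma toMat_sm (s : K) (A : M3) : toMat (M3.sm s A) = s • toMat A := by
  apply Matrix.ext
  intro i j
  fin_cases i <;> fin_cases j <;> refine K.ext ?_ ?_ <;>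
    simp [toMat, M3.sm, Matrix.smul_apply, smul_eq_mul] <;> (try ring)

lemma toMat_one : toMat M3.one = 1 := by
  apply Matrix.ext
  intro i j
  fin_cases i <;> fin_cases j <;> rfl

lemma toMat_inj : Function.Injective toMat := by
  intro A B h
  have hj := fun i j => congrFun (congrFun h i) j
  cases A; cases B
  have h00 := hj 0 0; have h01 := hj 0 1; have h02 := hj 0 2
  have h10 := hj 1 0; have h11 := hj 1 1; have h12 := hj 1 2
  have h20 := hj 2 0; have h21 := hj 2 1; have h22 := hj 2 2
  simp only [toMat, Matrix.cons_val', Matrix.cons_val_zero, Matrix.cons_val_one,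
    Matrix.head_cons, Matrix.empty_val', Matrix.cons_val_fin_one, Matrix.head_fin_const,
    Matrix.cons_val_two, Matrix.tail_cons] at h00 h01 h02 h10 h11 h12 h20 h21 h22
  simp_all

noncomputable def m2c (A : M3) : Matrix (Fin 3) (Fin 3) ℂ := φM (toMat A)

lemma m2c_mul (A B : M3) : m2c (M3.mul A B) = m2c A * m2c B := by
  rw [m2c, m2c, m2c, toMat_mul]
  exact _root_.map_mul φM _ _

lemma m2c_sm (s : K) (A : M3) : m2c (M3.sm s A) = φ s • m2c A := by
  rw [m2c, m2c, toMat_sm, phiM_smul]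

lemma m2c_one : m2c M3.one = 1 := by
  rw [m2c, toMat_one]
  exact RingHom.map_one φM

lemma m2c_inj : Function.Injective m2c := fun _ _ h => toMat_inj (phiM_inj h)

lemma kpow_eq (c : K) (n : ℕ) : kpow c n = c ^ n := by
  induction n with
  | zero => rfl
  | succ n ih => rw [kpow, ih, pow_succ]

lemma phi_omegaK : φ ωK = ω := by simp [φ, ωK]

lemma phi_kpow_omega (n : ℕ) : φ (kpow ωK n) = ω ^ n := by
  rw [kpow_eq, map_pow, phi_omegaK]

lemma phi_kpow_sK (n : ℕ) : φ (kpow sK n) = si ^ n := by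
  rw [kpow_eq, map_pow]
  rw [show φ sK = si from phi_sK]

lemma omega_pow_mod (n : ℕ) : ω ^ (n % 3) = ω ^ n := by
  conv_rhs => rw [← Nat.div_add_mod n 3]
  rw [pow_add, pow_mul, omega_cube, one_pow, one_mul]

lemma omega_z3 (x y : ZMod 3) : ω ^ ((x + y).val) = ω ^ x.val * ω ^ y.val := by
  rw [ZMod.val_add, omega_pow_mod, pow_add]

lemma si_inv_pow_cancel (m : ℕ) : si⁻¹ ^ m * si ^ m = 1 := by
  rw [← mul_pow, inv_mul_cancel₀ si_ne, one_pow]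

lemma si_lemma (p1 p2 : ℕ) :
    si⁻¹ ^ p1 * si⁻¹ ^ p2 * si ^ (p1 + p2 - (p1 + p2) % 2) = si⁻¹ ^ ((p1 + p2) % 2) := by
  have h : p1 + p2 = (p1 + p2 - (p1 + p2) % 2) + (p1 + p2) % 2 := by omega
  calc si⁻¹ ^ p1 * si⁻¹ ^ p2 * si ^ (p1 + p2 - (p1 + p2) % 2)
      = si⁻¹ ^ ((p1 + p2 - (p1 + p2) % 2) + (p1 + p2) % 2) * si ^ (p1 + p2 - (p1 + p2) % 2) := by
        rw [← pow_add, ← h]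
    _ = si⁻¹ ^ ((p1 + p2) % 2) * (si⁻¹ ^ (p1 + p2 - (p1 + p2) % 2) * si ^ (p1 + p2 - (p1 + p2) % 2)) := by
        rw [pow_add]; ring
    _ = si⁻¹ ^ ((p1 + p2) % 2) := by rw [si_inv_pow_cancel, mul_one]

noncomputable def FC (t : T) : Matrix (Fin 3) (Fin 3) ℂ :=
  (si⁻¹ ^ pT t * ω ^ t.1.val) • m2c (n36 (t36 t))

lemma FC_one : FC e0 = 1 := by
  rw [FC, Dgen.2.2.2.1, m2c_one]
  norm_num [pT, e0]

lemma FC_mul (t u : T) : FC t * FC u = FC (mT t u) := by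
  rw [FC, FC, FC, smul_mul_smul_comm, ← m2c_mul, D2 (t36 t) (t36 u), m2c_sm, m2c_sm,
    phi_kpow_omega, phi_kpow_sK, smul_smul, smul_smul]
  have h1 : t36 (mT t u) = m36 (t36 t) (t36 u) := rfl
  have h2 : (mT t u).1 = t.1 + u.1 + ph (t36 t) (t36 u) := rfl
  have hp36 : p36 (m36 (t36 t) (t36 u)) = pT (mT t u) := rfl
  have hpt : p36 (t36 t) = pT t := rfl
  have hpu : p36 (t36 u) = pT u := rfl
  rw [h1, h2, hp36, hpt, hpu, pT_mul t u]
  congr 1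
  rw [omega_z3 (t.1 + u.1) (ph (t36 t) (t36 u)), omega_z3 t.1 u.1]
  linear_combination (ω ^ t.1.val * ω ^ u.1.val * ω ^ (ph (t36 t) (t36 u)).val) *
    si_lemma (pT t) (pT u)

lemma FC_inj : Function.Injective FC := by
  intro t u h
  have h1 : FC (mT t (invT u)) = 1 := by
    rw [← FC_mul, h, FC_mul, (D7 u).1, FC_one]
  apply Dcanc t u
  set w := mT t (invT u) with hw
  have h2 : (si ^ pT w) • FC w = (si ^ pT w) • (1 : Matrix (Fin 3) (Fin 3) ℂ) := by rw [h1]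
  rw [FC, smul_smul] at h2
  have h3 : si ^ pT w * (si⁻¹ ^ pT w * ω ^ w.1.val) = ω ^ w.1.val := by
    rw [← mul_assoc, ← mul_pow, mul_inv_cancel₀ si_ne, one_pow, one_mul]
  rw [h3] at h2
  apply Dtriv w
  apply m2c_inj
  rw [m2c_sm, m2c_sm, phi_kpow_omega, phi_kpow_sK, m2c_one]
  exact h2

lemma FC_pow (x : T) (n : ℕ) : FC x ^ n = FC (powT x n) := by
  induction n with
  | zero => rw [pow_zero, powT, FC_one]
  | succ n ih => rw [pow_succ, ih, powT, FC_mul]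
@[ext] structure Tg where
  t : T
deriving DecidableEq, Fintype

instance : One Tg := ⟨⟨e0⟩⟩
instance : Mul Tg := ⟨fun x y => ⟨mT x.t y.t⟩⟩
instance : Inv Tg := ⟨fun x => ⟨invT x.t⟩⟩

lemma mT_assoc (a b c : T) : mT (mT a b) c = mT a (mT b c) :=
  FC_inj (by rw [← FC_mul, ← FC_mul, ← FC_mul, ← FC_mul, mul_assoc])

lemma mT_one_left (a : T) : mT e0 a = a :=
  FC_inj (by rw [← FC_mul, FC_one, one_mul])

lemma mT_one_right (a : T) : mT a e0 = a :=
  FC_inj (by rw [← FC_mul, FC_one, mul_one])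

instance : Group Tg :=
  Group.ofLeftAxioms
    (fun a b c => Tg.ext (mT_assoc a.t b.t c.t))
    (fun a => Tg.ext (mT_one_left a.t))
    (fun a => Tg.ext ((D7 a.t).2))

lemma card_cc_Tg : Nat.card (ConjClasses Tg) = 14 := by
  have hbij : Function.Bijective (fun i : Fin 14 => ConjClasses.mk (Tg.mk (reps i))) := by
    constructor
    · intro i j hij
      obtain ⟨cu, hcu⟩ := isConj_iff.1 (ConjClasses.mk_eq_mk_iff_isConj.1 hij)
      exact Dreps i j ⟨cu.t, congrArg Tg.t hcu⟩
    · intro x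
      obtain ⟨a, rfl⟩ := ConjClasses.mk_surjective x
      refine ⟨clsT a.t, ConjClasses.mk_eq_mk_iff_isConj.2 (isConj_iff.2 ⟨Tg.mk (witT a.t), ?_⟩)⟩
      exact Tg.ext (Dwit a.t)
  rw [← Nat.card_eq_of_bijective _ hbij, Nat.card_eq_fintype_card, Fintype.card_fin]

lemma card_Tg108 : Nat.card Tg = 108 := by
  rw [Nat.card_eq_fintype_card]
  rfl

lemma card_T108 : Nat.card T = 108 := by
  rw [Nat.card_eq_fintype_card]
  rfl

lemma card_Teven : Nat.card {t : T // pT t = 0} = 54 := by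
  rw [Nat.card_eq_fintype_card]
  rfl

def ccCongr {G H : Type*} [Group G] [Group H] (e : G ≃* H) : ConjClasses G ≃ ConjClasses H where
  toFun := ConjClasses.map e.toMonoidHom
  invFun := ConjClasses.map e.symm.toMonoidHom
  left_inv := by
    intro x
    obtain ⟨a, rfl⟩ := ConjClasses.mk_surjective x
    show ConjClasses.mk (e.symm (e a)) = ConjClasses.mk a
    rw [MulEquiv.symm_apply_apply]
  right_inv := by
    intro x
    obtain ⟨a, rfl⟩ := ConjClasses.mk_surjective x
    show ConjClasses.mk (e (e.symm a)) = ConjClasses.mk a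
    rw [MulEquiv.apply_symm_apply]

lemma hCmat : m2c CKM = Cmat := by
  ext i j
  fin_cases i <;> fin_cases j <;>
    simp [m2c, toMat, CKM, Cmat, φM, RingHom.mapMatrix_apply, Matrix.map_apply, φ,
      Matrix.vecHead, Matrix.vecTail] <;>
    first
      | linear_combination (-1 : ℂ) * omega_quad
      | linear_combination omega_quad
      | norm_num

lemma hEmat : m2c EKM = Emat := by
  ext i j
  fin_cases i <;> fin_cases j <;>
    simp [m2c, toMat, EKM, Emat, φM, RingHom.mapMatrix_apply, Matrix.map_apply, φ,
      Matrix.vecHead, Matrix.vecTail]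

lemma hVtbl : !![1,1,1; 1,ω,ω^2; 1,ω^2,ω] = m2c VKM := by
  ext i j
  fin_cases i <;> fin_cases j <;>
    simp [m2c, toMat, VKM, φM, RingHom.mapMatrix_apply, Matrix.map_apply, φ,
      Matrix.vecHead, Matrix.vecTail] <;>
    first
      | linear_combination (-1 : ℂ) * omega_quad
      | linear_combination omega_quad
      | norm_num

lemma hVmat : Vmat = si⁻¹ • m2c VKM := by
  rw [show Vmat = (1 / si) • !![1,1,1; 1,ω,ω^2; 1,ω^2,ω] from rfl, one_div, hVtbl]
def fGL (c e v : GL (Fin 3) ℂ) (t : T) : GL (Fin 3) ℂ :=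
  (e * c * (e * e) * (c * c)) ^ t.1.val * c ^ t.2.1.val * e ^ t.2.2.1.val * v ^ t.2.2.2.val

section Main

variable {c e v : GL (Fin 3) ℂ}
  (hc : (c : Matrix (Fin 3) (Fin 3) ℂ) = Cmat)
  (he : (e : Matrix (Fin 3) (Fin 3) ℂ) = Emat)
  (hv : (v : Matrix (Fin 3) (Fin 3) ℂ) = Vmat)

include hc he in
lemma coe_z : ((e * c * (e * e) * (c * c) : GL (Fin 3) ℂ) : Matrix (Fin 3) (Fin 3) ℂ) = FC zt := by
  have h1 : ((e * c * (e * e) * (c * c) : GL (Fin 3) ℂ) : Matrix (Fin 3) (Fin 3) ℂ)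
      = Emat * Cmat * (Emat * Emat) * (Cmat * Cmat) := by
    simp [Units.val_mul, hc, he]
  rw [h1, ← hCmat, ← hEmat, ← m2c_mul, ← m2c_mul, ← m2c_mul, ← m2c_mul, ← m2c_mul,
    Dgen.2.2.2.2.2, m2c_sm, phi_omegaK, FC, Dgen.2.2.2.2.1, m2c_one]
  rw [show pT zt = 0 from rfl, show zt.1.val = 1 from rfl]
  norm_num

include hc in
lemma coe_c : (c : Matrix (Fin 3) (Fin 3) ℂ) = FC ct := by
  rw [hc, FC, Dgen.1, hCmat, show pT ct = 0 from rfl, show ct.1.val = 0 from rfl]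
  norm_num

include he in
lemma coe_e : (e : Matrix (Fin 3) (Fin 3) ℂ) = FC et := by
  rw [he, FC, Dgen.2.1, hEmat, show pT et = 0 from rfl, show et.1.val = 0 from rfl]
  norm_num

include hv in
lemma coe_v : (v : Matrix (Fin 3) (Fin 3) ℂ) = FC vt := by
  rw [hv, hVmat, FC, Dgen.2.2.1, show pT vt = 1 from rfl, show vt.1.val = 0 from rfl]
  norm_num

include hc he hv in
lemma coe_fGL (t : T) : ((fGL c e v t : GL (Fin 3) ℂ) : Matrix (Fin 3) (Fin 3) ℂ) = FC t := by
  rw [fGL, Units.val_mul, Units.val_mul, Units.val_mul, Units.val_pow_eq_pow_val,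
    Units.val_pow_eq_pow_val, Units.val_pow_eq_pow_val, Units.val_pow_eq_pow_val,
    coe_z hc he, coe_c hc, coe_e he, coe_v hv,
    FC_pow, FC_pow, FC_pow, FC_pow, FC_mul, FC_mul, FC_mul, Dword t]

include hc he hv in
lemma fGL_mul (t u : T) : fGL c e v t * fGL c e v u = fGL c e v (mT t u) :=
  Units.ext (by rw [Units.val_mul, coe_fGL hc he hv, coe_fGL hc he hv, coe_fGL hc he hv, FC_mul])

include hc he hv in
lemma fGL_one : fGL c e v e0 = 1 :=
  Units.ext (by rw [coe_fGL hc he hv, FC_one, Units.val_one])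

include hc he hv in
lemma fGL_inj {t u : T} (h : fGL c e v t = fGL c e v u) : t = u :=
  FC_inj (by rw [← coe_fGL hc he hv, ← coe_fGL hc he hv, h])

include hc he hv in
lemma fGL_inv (t : T) : (fGL c e v t)⁻¹ = fGL c e v (invT t) := by
  apply inv_eq_of_mul_eq_one_right
  rw [fGL_mul hc he hv, (D7 t).1, fGL_one hc he hv]

include hc he hv in
lemma fGL_ct : fGL c e v ct = c :=
  Units.ext (by rw [coe_fGL hc he hv, coe_c hc])

include hc he hv in
lemma fGL_et : fGL c e v et = e :=
  Units.ext (by rw [coe_fGL hc he hv, coe_e he])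

include hc he hv in
lemma fGL_vt : fGL c e v vt = v :=
  Units.ext (by rw [coe_fGL hc he hv, coe_v hv])

include hc he hv in
lemma fGL_v2 : fGL c e v ((0,0,0,2) : T) = v ^ 2 := by
  rw [← Dvt2, ← fGL_mul hc he hv, fGL_vt hc he hv, sq]

def Hsub (hc : (c : Matrix (Fin 3) (Fin 3) ℂ) = Cmat) (he : (e : Matrix (Fin 3) (Fin 3) ℂ) = Emat)
    (hv : (v : Matrix (Fin 3) (Fin 3) ℂ) = Vmat) : Subgroup (GL (Fin 3) ℂ) where
  carrier := Set.range (fGL c e v)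
  one_mem' := ⟨e0, fGL_one hc he hv⟩
  mul_mem' := by
    rintro x y ⟨t, rfl⟩ ⟨u, rfl⟩
    exact ⟨mT t u, (fGL_mul hc he hv t u).symm⟩
  inv_mem' := by
    rintro x ⟨t, rfl⟩
    exact ⟨invT t, (fGL_inv hc he hv t).symm⟩

def Nsub (hc : (c : Matrix (Fin 3) (Fin 3) ℂ) = Cmat) (he : (e : Matrix (Fin 3) (Fin 3) ℂ) = Emat)
    (hv : (v : Matrix (Fin 3) (Fin 3) ℂ) = Vmat) : Subgroup (GL (Fin 3) ℂ) where
  carrier := {x | ∃ t : T, pT t = 0 ∧ fGL c e v t = x}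
  one_mem' := ⟨e0, rfl, fGL_one hc he hv⟩
  mul_mem' := by
    rintro x y ⟨t, ht, rfl⟩ ⟨u, hu, rfl⟩
    exact ⟨mT t u, by rw [pT_mul, ht, hu], (fGL_mul hc he hv t u).symm⟩
  inv_mem' := by
    rintro x ⟨t, ht, rfl⟩
    exact ⟨invT t, by rw [pT_inv, ht], (fGL_inv hc he hv t).symm⟩

include hc he hv in
lemma hHG : Subgroup.closure {c, e, v} = Hsub hc he hv := by
  apply le_antisymm
  · rw [Subgroup.closure_le]
    rintro x hx
    simp only [Set.mem_insert_iff, Set.mem_singleton_iff] at hx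
    rcases hx with rfl | rfl | rfl
    · exact ⟨ct, fGL_ct hc he hv⟩
    · exact ⟨et, fGL_et hc he hv⟩
    · exact ⟨vt, fGL_vt hc he hv⟩
  · rintro x ⟨t, rfl⟩
    have hcm : c ∈ Subgroup.closure {c, e, v} := Subgroup.subset_closure (by simp)
    have hem : e ∈ Subgroup.closure {c, e, v} := Subgroup.subset_closure (by simp)
    have hvm : v ∈ Subgroup.closure {c, e, v} := Subgroup.subset_closure (by simp)
    have hzm : e * c * (e * e) * (c * c) ∈ Subgroup.closure {c, e, v} :=
      mul_mem (mul_mem (mul_mem hem hcm) (mul_mem hem hem)) (mul_mem hcm hcm)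
    exact mul_mem (mul_mem (mul_mem (pow_mem hzm _) (pow_mem hcm _)) (pow_mem hem _)) (pow_mem hvm _)

include hc he hv in
lemma hNG : Subgroup.closure {c, e, v ^ 2} = Nsub hc he hv := by
  apply le_antisymm
  · rw [Subgroup.closure_le]
    rintro x hx
    simp only [Set.mem_insert_iff, Set.mem_singleton_iff] at hx
    rcases hx with rfl | rfl | rfl
    · exact ⟨ct, rfl, fGL_ct hc he hv⟩
    · exact ⟨et, rfl, fGL_et hc he hv⟩
    · exact ⟨(0,0,0,2), rfl, fGL_v2 hc he hv⟩
  · rintro x ⟨t, ht, rfl⟩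
    have hcm : c ∈ Subgroup.closure {c, e, v ^ 2} := Subgroup.subset_closure (by simp)
    have hem : e ∈ Subgroup.closure {c, e, v ^ 2} := Subgroup.subset_closure (by simp)
    have hvm : v ^ 2 ∈ Subgroup.closure {c, e, v ^ 2} := Subgroup.subset_closure (by simp)
    have hzm : e * c * (e * e) * (c * c) ∈ Subgroup.closure {c, e, v ^ 2} :=
      mul_mem (mul_mem (mul_mem hem hcm) (mul_mem hem hem)) (mul_mem hcm hcm)
    have ht' : t.2.2.2.val % 2 = 0 := ht
    have h4 : t.2.2.2.val < 4 := ZMod.val_lt _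
    have h02 : t.2.2.2.val = 0 ∨ t.2.2.2.val = 2 := by omega
    show (e * c * (e * e) * (c * c)) ^ t.1.val * c ^ t.2.1.val * e ^ t.2.2.1.val * v ^ t.2.2.2.val
      ∈ Subgroup.closure {c, e, v ^ 2}
    rcases h02 with h0 | h2
    · rw [h0, pow_zero, mul_one]
      exact mul_mem (mul_mem (pow_mem hzm _) (pow_mem hcm _)) (pow_mem hem _)
    · rw [h2]
      exact mul_mem (mul_mem (mul_mem (pow_mem hzm _) (pow_mem hcm _)) (pow_mem hem _)) hvm

include hc he hv in
lemma card_H : Nat.card (Hsub hc he hv) = 108 := by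
  have hb : Function.Bijective
      (fun t : T => (⟨fGL c e v t, ⟨t, rfl⟩⟩ : Hsub hc he hv)) := by
    constructor
    · intro t u h
      exact fGL_inj hc he hv (congrArg Subtype.val h)
    · rintro ⟨x, t, rfl⟩
      exact ⟨t, rfl⟩
  rw [← Nat.card_eq_of_bijective _ hb, card_T108]

include hc he hv in
lemma card_N : Nat.card (Nsub hc he hv) = 54 := by
  have hb : Function.Bijective
      (fun s : {t : T // pT t = 0} => (⟨fGL c e v s.1, ⟨s.1, s.2, rfl⟩⟩ : Nsub hc he hv)) := by
    constructor
    · intro t u h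
      exact Subtype.ext (fGL_inj hc he hv (congrArg Subtype.val h))
    · rintro ⟨x, t, ht, rfl⟩
      exact ⟨⟨t, ht⟩, rfl⟩
  rw [← Nat.card_eq_of_bijective _ hb, card_Teven]

end Main

/-- Σ(36×3) = ⟨C,E,V⟩ has order 108, contains Δ(54) = ⟨C,E,V²⟩ as a normal
subgroup of index 2, and has exactly 14 conjugacy classes. -/
theorem stmt_13 (c e v : GL (Fin 3) ℂ)
    (hc : (c : Matrix (Fin 3) (Fin 3) ℂ) = Cmat)
    (he : (e : Matrix (Fin 3) (Fin 3) ℂ) = Emat)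
    (hv : (v : Matrix (Fin 3) (Fin 3) ℂ) = Vmat) :
    Nat.card (Subgroup.closure {c, e, v}) = 108 ∧
    Subgroup.closure {c, e, v ^ 2} ≤ Subgroup.closure {c, e, v} ∧
    (∀ g ∈ Subgroup.closure {c, e, v}, ∀ x ∈ Subgroup.closure {c, e, v ^ 2},
        g * x * g⁻¹ ∈ Subgroup.closure {c, e, v ^ 2}) ∧
    (Subgroup.closure {c, e, v ^ 2}).relIndex (Subgroup.closure {c, e, v}) = 2 ∧
    Nat.card (ConjClasses (Subgroup.closure {c, e, v})) = 14 := by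
  refine ⟨?_, ?_, ?_, ?_, ?_⟩
  · rw [hHG hc he hv]
    exact card_H hc he hv
  · rw [Subgroup.closure_le]
    rintro x hx
    simp only [Set.mem_insert_iff, Set.mem_singleton_iff] at hx
    rcases hx with rfl | rfl | rfl
    · exact Subgroup.subset_closure (by simp)
    · exact Subgroup.subset_closure (by simp)
    · exact pow_mem (Subgroup.subset_closure (by simp)) 2
  · intro g hg x hx
    rw [hHG hc he hv] at hg
    rw [hNG hc he hv] at hx
    obtain ⟨t, rfl⟩ := hg
    obtain ⟨u, hu, rfl⟩ := hx
    rw [hNG hc he hv, fGL_inv hc he hv, fGL_mul hc he hv, fGL_mul hc he hv]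
    refine ⟨_, ?_, rfl⟩
    rw [pT_mul, pT_mul, pT_inv, hu]
    have := pT_lt t
    omega
  · rw [hNG hc he hv, hHG hc he hv]
    have hle : Nsub hc he hv ≤ Hsub hc he hv := by
      rintro x ⟨t, ht, rfl⟩
      exact ⟨t, rfl⟩
    have h1 := Subgroup.card_mul_index ((Nsub hc he hv).subgroupOf (Hsub hc he hv))
    have h2 : Nat.card ((Nsub hc he hv).subgroupOf (Hsub hc he hv)) = 54 := by
      rw [Nat.card_congr (Subgroup.subgroupOfEquivOfLe hle).toEquiv, card_N hc he hv]
    have h3 : Nat.card (Hsub hc he hv) = 108 := card_H hc he hv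
    have h4 : Subgroup.relIndex (Nsub hc he hv) (Hsub hc he hv)
        = ((Nsub hc he hv).subgroupOf (Hsub hc he hv)).index := rfl
    rw [h2, h3] at h1
    rw [h4]
    omega
  · rw [hHG hc he hv]
    let mh : Tg →* (Hsub hc he hv) :=
      MonoidHom.mk' (fun x => ⟨fGL c e v x.t, ⟨x.t, rfl⟩⟩)
        (fun a b => Subtype.ext (fGL_mul hc he hv a.t b.t).symm)
    have hbij : Function.Bijective mh := by
      constructor
      · intro a b h
        exact Tg.ext (fGL_inj hc he hv (congrArg Subtype.val h))
      · rintro ⟨x, t, rfl⟩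
        exact ⟨⟨t⟩, rfl⟩
    have hcard : Nat.card (ConjClasses Tg)
        = Nat.card (ConjClasses (Hsub hc he hv)) :=
      Nat.card_congr (ccCongr (MulEquiv.ofBijective mh hbij))
    rw [← hcard, card_cc_Tg]
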